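/- Assume that for every x ∈ X the map s ↦ σ_s(x) is finite-to-one, and for each x let μ_x be the left regular orbit cocycle at x. Let I ⊆ S be a finite set and f_s ∈ C(X) for s ∈ I, with f_{s_0} ≠ 0 for some s_0 ∈ I. Then there exist x ∈ X and a character γ of S such that the bounded operator ∑_{s∈I} ρ_{x, γμ_x}(S_s) ρ_{x, γμ_x}(f_s) on ℓ²(S(x)) is nonzero. -/

import Mathlib

open scoped ComplexConjugate

section Grothendieck

variable {S : Type} [AddCancelCommMonoid S]

/-- The Grothendieck-group setoid on `S × S`. -/
private def grS (S : Type) [AddCancelCommMonoid S] : Setoid (S × S) where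
  r a b := a.1 + b.2 = b.1 + a.2
  iseqv := by
    refine ⟨fun a => rfl, fun h => h.symm, ?_⟩
    intro a b c h1 h2
    have h3 : (a.1 + c.2) + (b.1 + b.2) = (c.1 + a.2) + (b.1 + b.2) := by
      calc (a.1 + c.2) + (b.1 + b.2) = (a.1 + b.2) + (b.1 + c.2) := by abel
        _ = (b.1 + a.2) + (c.1 + b.2) := by rw [h1, h2]
        _ = (c.1 + a.2) + (b.1 + b.2) := by abel
    exact add_right_cancel h3

private def Gr (S : Type) [AddCancelCommMonoid S] : Type := Quotient (grS S)

private instance : Add (Gr S) :=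
  ⟨Quotient.map₂ (fun a b => (a.1 + b.1, a.2 + b.2)) (by
    intro a a' ha b b' hb
    have ha' : a.1 + a'.2 = a'.1 + a.2 := ha
    have hb' : b.1 + b'.2 = b'.1 + b.2 := hb
    show a.1 + b.1 + (a'.2 + b'.2) = a'.1 + b'.1 + (a.2 + b.2)
    calc a.1 + b.1 + (a'.2 + b'.2) = (a.1 + a'.2) + (b.1 + b'.2) := by abel
      _ = (a'.1 + a.2) + (b'.1 + b.2) := by rw [ha', hb']
      _ = a'.1 + b'.1 + (a.2 + b.2) := by abel)⟩

private instance : Zero (Gr S) := ⟨Quotient.mk (grS S) (0, 0)⟩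

private instance : Neg (Gr S) :=
  ⟨Quotient.map (fun a => (a.2, a.1)) (by
    intro a b hab
    have hab' : a.1 + b.2 = b.1 + a.2 := hab
    show a.2 + b.1 = b.2 + a.1
    calc a.2 + b.1 = b.1 + a.2 := by abel
      _ = a.1 + b.2 := hab'.symm
      _ = b.2 + a.1 := by abel)⟩

private instance : AddCommGroup (Gr S) where
  add := (· + ·)
  zero := 0
  neg := Neg.neg
  nsmul := nsmulRec
  zsmul := zsmulRec
  add_assoc := by
    intro a b c
    induction a using Quotient.inductionOn with | _ a =>
    induction b using Quotient.inductionOn with | _ b =>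
    induction c using Quotient.inductionOn with | _ c =>
    refine Quotient.sound ?_
    show (a.1 + b.1 + c.1) + (a.2 + (b.2 + c.2)) = (a.1 + (b.1 + c.1)) + (a.2 + b.2 + c.2)
    abel
  zero_add := by
    intro a
    induction a using Quotient.inductionOn with | _ a =>
    refine Quotient.sound ?_
    show (0 + a.1) + a.2 = a.1 + (0 + a.2)
    abel
  add_zero := by
    intro a
    induction a using Quotient.inductionOn with | _ a =>
    refine Quotient.sound ?_
    show (a.1 + 0) + a.2 = a.1 + (a.2 + 0)
    abel
  neg_add_cancel := by
    intro a
    induction a using Quotient.inductionOn with | _ a =>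
    refine Quotient.sound ?_
    show (a.2 + a.1) + 0 = 0 + (a.1 + a.2)
    abel
  add_comm := by
    intro a b
    induction a using Quotient.inductionOn with | _ a =>
    induction b using Quotient.inductionOn with | _ b =>
    refine Quotient.sound ?_
    show (a.1 + b.1) + (b.2 + a.2) = (b.1 + a.1) + (a.2 + b.2)
    abel

private def toGr (S : Type) [AddCancelCommMonoid S] : S → Gr S :=
  fun s => Quotient.mk (grS S) (s, 0)

private lemma toGr_zero : toGr S 0 = 0 := rfl

private lemma toGr_add (a b : S) : toGr S (a + b) = toGr S a + toGr S b := by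
  refine (Quotient.sound ?_).symm
  show (a + b) + 0 = (a + b) + (0 + 0)
  abel

private lemma toGr_injective : Function.Injective (toGr S) := by
  intro a b h
  have h2 : a + 0 = b + 0 := Quotient.exact h
  simpa using h2

/-- Cast from the rational circle to the real circle. -/
private noncomputable def ratToRealCircle : AddCircle (1 : ℚ) →+ AddCircle (1 : ℝ) :=
  QuotientAddGroup.map (AddSubgroup.zmultiples (1 : ℚ)) (AddSubgroup.zmultiples (1 : ℝ))
    (Rat.castHom ℝ).toAddMonoidHom (by
      intro q hq
      obtain ⟨k, hk⟩ := AddSubgroup.mem_zmultiples_iff.mp hq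
      have hq' : q = (k : ℚ) := by rw [← hk]; simp [zsmul_eq_mul]
      refine AddSubgroup.mem_comap.mpr (AddSubgroup.mem_zmultiples_iff.mpr ⟨k, ?_⟩)
      rw [hq']
      simp [zsmul_eq_mul])

private lemma ratToRealCircle_eq_zero {a : AddCircle (1 : ℚ)}
    (h : ratToRealCircle a = 0) : a = 0 := by
  induction a using QuotientAddGroup.induction_on with | H q =>
  have h' : ((q : ℝ) : AddCircle (1 : ℝ)) = 0 := by
    simpa [ratToRealCircle, QuotientAddGroup.map_mk] using h
  obtain ⟨n, hn⟩ := (AddCircle.coe_eq_zero_iff (1 : ℝ)).mp h'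
  have hq : q = (n : ℚ) := by
    have : (n : ℝ) = (q : ℝ) := by simpa [zsmul_eq_mul] using hn
    exact_mod_cast this.symm
  refine (AddCircle.coe_eq_zero_iff (1 : ℚ)).mpr ⟨n, ?_⟩
  rw [hq]
  simp [zsmul_eq_mul]

private lemma exists_addChar_ne {s t : S} (h : s ≠ t) :
    ∃ ψ : AddChar S Circle, ψ s ≠ ψ t := by
  have hne : toGr S s - toGr S t ≠ 0 := sub_ne_zero.mpr fun he => h (toGr_injective he)
  obtain ⟨c, hc⟩ := CharacterModule.exists_character_apply_ne_zero_of_ne_zero hne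
  refine ⟨{ toFun := fun u => AddCircle.toCircle (ratToRealCircle (c (toGr S u)))
            map_zero_eq_one' := by
              show AddCircle.toCircle (ratToRealCircle (c (toGr S 0))) = 1
              rw [toGr_zero, map_zero, map_zero, AddCircle.toCircle_zero]
            map_add_eq_mul' := fun a b => by
              show AddCircle.toCircle (ratToRealCircle (c (toGr S (a + b)))) = _
              rw [toGr_add, map_add, map_add, AddCircle.toCircle_add] }, ?_⟩
  intro heq
  have h1 : ratToRealCircle (c (toGr S s)) = ratToRealCircle (c (toGr S t)) :=
    AddCircle.injective_toCircle one_ne_zero heq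
  have h2 : c (toGr S s) = c (toGr S t) :=
    sub_eq_zero.mp (ratToRealCircle_eq_zero (by rw [map_sub, h1, sub_self]))
  apply hc
  rw [map_sub, h2, sub_self]

private lemma exists_char (F : Finset S) (c : S → ℂ) (s₀ : S) (hs₀ : s₀ ∈ F)
    (hc : c s₀ ≠ 0) :
    ∃ ψ : AddChar S Circle, ∑ s ∈ F, (ψ s : ℂ) * c s ≠ 0 := by
  by_contra hall
  push_neg at hall
  classical
  let e : S → (AddChar S Circle →* ℂ) := fun s =>
    { toFun := fun ψ => (ψ s : ℂ)
      map_one' := by simp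
      map_mul' := by intro ψ φ; simp }
  have einj : Function.Injective (fun s : F => e (s : S)) := by
    intro a b hab
    by_contra hne
    have hne' : (a : S) ≠ (b : S) := fun hh => hne (Subtype.ext hh)
    obtain ⟨ψ, hψ⟩ := exists_addChar_ne hne'
    apply hψ
    have := congrArg (fun m : AddChar S Circle →* ℂ => m ψ) hab
    exact Circle.coe_injective this
  have li : LinearIndependent ℂ (fun s : F => ⇑(e (s : S))) :=
    (linearIndependent_monoidHom (AddChar S Circle) ℂ).comp (fun s : F => e (s : S)) einj
  have hzero : (∑ s : F, c (s : S) • ⇑(e (s : S))) = 0 := by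
    funext ψ
    simp only [Finset.sum_apply, Pi.smul_apply, Pi.zero_apply, smul_eq_mul]
    have h1 : ∑ s : F, c (s : S) * (ψ (s : S) : ℂ) = ∑ s ∈ F, c s * (ψ s : ℂ) :=
      Finset.sum_coe_sort F (fun s => c s * (ψ s : ℂ))
    rw [show (∑ s : F, c (s : S) * (e (s : S)) ψ) = ∑ s : F, c (s : S) * (ψ (s : S) : ℂ) from rfl,
      h1]
    rw [← hall ψ]
    exact Finset.sum_congr rfl fun s _ => mul_comm _ _
  have := Fintype.linearIndependent_iff.mp li (fun s : F => c (s : S)) hzero ⟨s₀, hs₀⟩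
  exact hc this

end Grothendieck


/-- the orbit representations associated to the left regular orbit cocycles
(twisted by characters) separate the elements of the algebra of finite sums `∑ S_s f_s`. -/
theorem left_regular_orbit_reps_separate
    {S : Type} [AddCancelCommMonoid S] [Countable S] [DecidableEq S]
    {X : Type} [MetricSpace X] [CompactSpace X] [Nonempty X] [DecidableEq X]
    (σ : S → C(X, X))
    (hσ0 : σ 0 = ContinuousMap.id X)
    (hσadd : ∀ s t : S, σ (s + t) = (σ s).comp (σ t))
    (hσsurj : ∀ s : S, Function.Surjective (σ s))
    -- the maps s ↦ σ_s(x) are finite-to-one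
    (hfin : ∀ x y : X, {s : S | (σ s) x = y}.Finite)
    -- the actions of S on the orbits S(x)
    (στ : (x : X) → S → {y : X // ∃ s : S, (σ s) x = y} → {y : X // ∃ s : S, (σ s) x = y})
    (hστ : ∀ (x : X) (t : S) (y : {y : X // ∃ s : S, (σ s) x = y}),
      (στ x t y : X) = (σ t) (y : X))
    -- for each x, the orthogonal projection of ℓ²(S) onto H₀(x)
    (Q : X → (lp (fun _ : S => ℂ) 2 →L[ℂ] lp (fun _ : S => ℂ) 2))
    (hQmem : ∀ (x : X) (η : lp (fun _ : S => ℂ) 2),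
      Q x η ∈ (Submodule.span ℂ {v : lp (fun _ : S => ℂ) 2 | ∃ s t : S,
        (σ s) x = (σ t) x ∧ v = lp.single 2 s (1 : ℂ) - lp.single 2 t (1 : ℂ)}).topologicalClosure)
    (hQfix : ∀ (x : X), ∀ η ∈ (Submodule.span ℂ {v : lp (fun _ : S => ℂ) 2 | ∃ s t : S,
        (σ s) x = (σ t) x ∧ v = lp.single 2 s (1 : ℂ) - lp.single 2 t (1 : ℂ)}).topologicalClosure,
      Q x η = η)
    (hQorth : ∀ (x : X) (η : lp (fun _ : S => ℂ) 2),
      ∀ v ∈ (Submodule.span ℂ {v : lp (fun _ : S => ℂ) 2 | ∃ s t : S,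
        (σ s) x = (σ t) x ∧ v = lp.single 2 s (1 : ℂ) - lp.single 2 t (1 : ℂ)}).topologicalClosure,
      inner ℂ (η - Q x η) v = (0 : ℂ))
    -- the left regular orbit cocycles
    (μ : (x : X) → S → {y : X // ∃ s : S, (σ s) x = y} → ℝ)
    (hμ : ∀ (x : X) (t u : S),
      μ x t ⟨(σ u) x, ⟨u, rfl⟩⟩ =
        ‖lp.single 2 (t + u) (1 : ℂ) - Q x (lp.single 2 (t + u) (1 : ℂ))‖ /
          ‖lp.single 2 u (1 : ℂ) - Q x (lp.single 2 u (1 : ℂ))‖)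
    -- the orbit representations ρ_{x, γμ_x}
    (ρf : (x : X) → (S → ℂ) → C(X, ℂ) →
      (lp (fun _ : {y : X // ∃ s : S, (σ s) x = y} => ℂ) 2 →L[ℂ]
        lp (fun _ : {y : X // ∃ s : S, (σ s) x = y} => ℂ) 2))
    (ρS : (x : X) → (S → ℂ) → S →
      (lp (fun _ : {y : X // ∃ s : S, (σ s) x = y} => ℂ) 2 →L[ℂ]
        lp (fun _ : {y : X // ∃ s : S, (σ s) x = y} => ℂ) 2))
    (hρf : ∀ (x : X) (γ : S → ℂ) (g : C(X, ℂ))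
      (η : lp (fun _ : {y : X // ∃ s : S, (σ s) x = y} => ℂ) 2)
      (y : {y : X // ∃ s : S, (σ s) x = y}), (ρf x γ g η) y = g (y : X) * η y)
    (hρS : ∀ (x : X) (γ : S → ℂ) (t : S) (y : {y : X // ∃ s : S, (σ s) x = y}),
      ρS x γ t (lp.single 2 y (1 : ℂ)) =
        (γ t * (μ x t y : ℂ)) • lp.single 2 (στ x t y) (1 : ℂ))
    -- a finite set of coefficients, not all zero
    (I : Finset S) (f : S → C(X, ℂ)) (s₀ : S) (hs₀ : s₀ ∈ I) (hf : f s₀ ≠ 0) :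
    ∃ (x : X) (γ : S → ℂ),
      (γ 0 = 1 ∧ (∀ s t : S, γ (s + t) = γ s * γ t) ∧ (∀ s : S, ‖γ s‖ = 1)) ∧
      (∑ s ∈ I, (ρS x γ s).comp (ρf x γ (f s))) ≠ 0 := by
  classical
  obtain ⟨x, hfx⟩ : ∃ x : X, f s₀ x ≠ 0 := by
    by_contra h
    push_neg at h
    exact hf (ContinuousMap.ext fun y => h y)
  -- the `Q x`-complements of standard basis vectors are nonzero
  have key : ∀ u : S, lp.single 2 u (1 : ℂ) - Q x (lp.single 2 u (1 : ℂ)) ≠ 0 := by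
    intro u hzero
    have hmem : lp.single 2 u (1 : ℂ) ∈ (Submodule.span ℂ {v : lp (fun _ : S => ℂ) 2 | ∃ s t : S,
        (σ s) x = (σ t) x ∧ v = lp.single 2 s (1 : ℂ) -
          lp.single 2 t (1 : ℂ)}).topologicalClosure := by
      have h1 : lp.single 2 u (1 : ℂ) = Q x (lp.single 2 u (1 : ℂ)) := by
        rwa [sub_eq_zero] at hzero
      rw [h1]; exact hQmem x _
    set T : Finset S := (hfin x ((σ u) x)).toFinset with hT
    have huT : u ∈ T := by rw [hT]; simp
    set w : lp (fun _ : S => ℂ) 2 := ∑ s ∈ T, lp.single 2 s (1 : ℂ) with hw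
    have hwapp : ∀ j : S, w j = if j ∈ T then (1 : ℂ) else 0 := by
      intro j
      have h2 : w j = ∑ s ∈ T, (lp.single 2 s (1 : ℂ) : ∀ _ : S, ℂ) j := by
        rw [hw, lp.coeFn_sum, Finset.sum_apply]
      rw [h2]
      by_cases hj : j ∈ T
      · rw [if_pos hj, Finset.sum_eq_single_of_mem j hj]
        · exact lp.single_apply_self 2 j 1
        · intro b _ hbj
          exact lp.single_apply_ne 2 b 1 (Ne.symm hbj)
      · rw [if_neg hj, Finset.sum_eq_zero]
        intro b hb
        exact lp.single_apply_ne 2 b 1 (fun hjb => hj (by rw [hjb]; exact hb))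
    have hker : (Submodule.span ℂ {v : lp (fun _ : S => ℂ) 2 | ∃ s t : S,
        (σ s) x = (σ t) x ∧ v = lp.single 2 s (1 : ℂ) -
          lp.single 2 t (1 : ℂ)}).topologicalClosure ≤
        (innerSL ℂ w).ker := by
      apply Submodule.topologicalClosure_minimal
      swap
      · exact ContinuousLinearMap.isClosed_ker _
      rw [Submodule.span_le]
      rintro v ⟨s, t, hst, rfl⟩
      have hmemiff : s ∈ T ↔ t ∈ T := by
        rw [hT]
        simp only [Set.Finite.mem_toFinset, Set.mem_setOf_eq, hst]
      have hws : (if s ∈ T then (1 : ℂ) else 0) = (if t ∈ T then (1 : ℂ) else 0) := by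
        by_cases h : s ∈ T
        · rw [if_pos h, if_pos (hmemiff.mp h)]
        · rw [if_neg h, if_neg (fun ht => h (hmemiff.mpr ht))]
      simp only [SetLike.mem_coe, LinearMap.mem_ker, ContinuousLinearMap.coe_coe, innerSL_apply_apply]
      rw [inner_sub_right, lp.inner_single_right, lp.inner_single_right]
      rw [RCLike.inner_apply, RCLike.inner_apply, hwapp s, hwapp t, hws, sub_self]
    have hfun : (innerSL ℂ w) (lp.single 2 u (1 : ℂ)) = 0 := hker hmem
    rw [innerSL_apply_apply, lp.inner_single_right, RCLike.inner_apply, hwapp u, if_pos huT] at hfun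
    simp at hfun
  have keypos : ∀ u : S, 0 < ‖lp.single 2 u (1 : ℂ) - Q x (lp.single 2 u (1 : ℂ))‖ :=
    fun u => norm_pos_iff.mpr (key u)
  have hμpos : ∀ t : S, 0 < μ x t ⟨(σ 0) x, ⟨0, rfl⟩⟩ := by
    intro t
    rw [hμ x t 0]
    exact div_pos (keypos (t + 0)) (keypos 0)
  have hx0coe : (((⟨(σ 0) x, ⟨0, rfl⟩⟩ : {y : X // ∃ s : S, (σ s) x = y}) : X)) = x := by
    show (σ 0) x = x
    rw [hσ0]; rfl
  set x₀ : {y : X // ∃ s : S, (σ s) x = y} := ⟨(σ 0) x, ⟨0, rfl⟩⟩ with hx₀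
  set z₀ : {y : X // ∃ s : S, (σ s) x = y} := ⟨(σ s₀) x, ⟨s₀, rfl⟩⟩ with hz₀
  set F : Finset S := I.filter (fun s => (σ s) x = (σ s₀) x) with hF
  have hs₀F : s₀ ∈ F := by rw [hF]; exact Finset.mem_filter.mpr ⟨hs₀, rfl⟩
  set c : S → ℂ := fun s => ((μ x s x₀ : ℝ) : ℂ) * f s x with hc
  have hcs₀ : c s₀ ≠ 0 := by
    rw [hc]
    exact mul_ne_zero (by exact_mod_cast (hμpos s₀).ne') hfx
  obtain ⟨ψ, hψ⟩ := exists_char F c s₀ hs₀F hcs₀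
  set γ : S → ℂ := fun s => (ψ s : ℂ) with hγ
  refine ⟨x, γ, ⟨by simp [hγ], fun s t => by
      simp only [hγ]; rw [AddChar.map_add_eq_mul, Circle.coe_mul], fun s => by
      simp only [hγ, Circle.norm_coe]⟩, ?_⟩
  intro hT0
  apply hψ
  have hstep1 : ∀ s : S, ρf x γ (f s) (lp.single 2 x₀ (1 : ℂ)) =
      f s x • lp.single 2 x₀ (1 : ℂ) := by
    intro s
    refine lp.ext (funext fun y => ?_)
    rw [hρf]
    rw [lp.coeFn_smul, Pi.smul_apply, smul_eq_mul]
    by_cases hy : y = x₀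
    · have hyx : (y : X) = x := by rw [hy]; exact hx0coe
      rw [hyx]
    · rw [lp.single_apply_ne 2 x₀ 1 hy, mul_zero, mul_zero]
  have hstep2 : ∀ s : S,
      ((ρS x γ s).comp (ρf x γ (f s))) (lp.single 2 x₀ (1 : ℂ)) =
        (f s x * (γ s * ((μ x s x₀ : ℝ) : ℂ))) • lp.single 2 (στ x s x₀) (1 : ℂ) := by
    intro s
    rw [ContinuousLinearMap.comp_apply, hstep1, map_smul, hρS, smul_smul]
  have hvec : (∑ s ∈ I, (f s x * (γ s * ((μ x s x₀ : ℝ) : ℂ))) •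
      lp.single 2 (στ x s x₀) (1 : ℂ) :
        lp (fun _ : {y : X // ∃ s : S, (σ s) x = y} => ℂ) 2) = 0 := by
    have h1 : (∑ s ∈ I, (ρS x γ s).comp (ρf x γ (f s))) (lp.single 2 x₀ (1 : ℂ)) =
        ∑ s ∈ I, (f s x * (γ s * ((μ x s x₀ : ℝ) : ℂ))) • lp.single 2 (στ x s x₀) (1 : ℂ) := by
      rw [ContinuousLinearMap.sum_apply]
      exact Finset.sum_congr rfl fun s _ => hstep2 s
    rw [← h1, hT0]
    simp
  have hcoord : ∑ s ∈ I, (f s x * (γ s * ((μ x s x₀ : ℝ) : ℂ))) *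
      (if z₀ = στ x s x₀ then (1 : ℂ) else 0) = 0 := by
    have h1 := congrArg
      (fun η : lp (fun _ : {y : X // ∃ s : S, (σ s) x = y} => ℂ) 2 => (η : ∀ _, ℂ) z₀) hvec
    simp only at h1
    rw [lp.coeFn_sum, Finset.sum_apply, lp.coeFn_zero, Pi.zero_apply] at h1
    have h2 : ∀ s ∈ I,
        (((f s x * (γ s * ((μ x s x₀ : ℝ) : ℂ))) • lp.single 2 (στ x s x₀) (1 : ℂ) :
          lp (fun _ : {y : X // ∃ s : S, (σ s) x = y} => ℂ) 2) : ∀ _, ℂ) z₀ =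
        (f s x * (γ s * ((μ x s x₀ : ℝ) : ℂ))) * (if z₀ = στ x s x₀ then (1 : ℂ) else 0) := by
      intro s _
      rw [lp.coeFn_smul, Pi.smul_apply, smul_eq_mul]
      congr 1
      rw [lp.single_apply]
      by_cases h : z₀ = στ x s x₀
      · rw [Pi.single_apply]
      · rw [Pi.single_apply]
    rw [Finset.sum_congr rfl h2] at h1
    exact h1
  have hterm : ∀ s ∈ I, (f s x * (γ s * ((μ x s x₀ : ℝ) : ℂ))) *
      (if z₀ = στ x s x₀ then (1 : ℂ) else 0) =
      if (σ s) x = (σ s₀) x then γ s * c s else 0 := by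
    intro s _
    have hcond : (z₀ = στ x s x₀) ↔ ((σ s) x = (σ s₀) x) := by
      rw [Subtype.ext_iff, hστ]
      rw [hz₀, hx₀]
      show (σ s₀) x = (σ s) ((σ 0) x) ↔ _
      rw [hσ0]
      show (σ s₀) x = (σ s) x ↔ _
      exact eq_comm
    simp only [hcond, mul_ite, mul_one, mul_zero, hc]
    split_ifs with h
    · ring
    · rfl
  calc ∑ s ∈ F, (ψ s : ℂ) * c s
      = ∑ s ∈ I, (if (σ s) x = (σ s₀) x then γ s * c s else 0) := by
        rw [hF, Finset.sum_filter]
    _ = ∑ s ∈ I, (f s x * (γ s * ((μ x s x₀ : ℝ) : ℂ))) *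
        (if z₀ = στ x s x₀ then (1 : ℂ) else 0) := (Finset.sum_congr rfl hterm).symm
    _ = 0 := hcoord
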